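/- Let f be a rational function over ℂ (an element of RatFunc ℂ, with coprime numerator f.num and denominator f.denom). Assume: (i) every complex root of f.denom is a root of unity, i.e. for every z ∈ ℂ with f.denom.eval z = 0 there is m ≥ 1 with z^m = 1; (ii) the degree of f.num is at most the degree of f.denom; (iii) there is a constant M such that for every z ∈ ℂ with ‖z‖ = 1 and f.denom.eval z ≠ 0 one has ‖f.num.eval z / f.denom.eval z‖ ≤ M; (iv) f.num.eval 0 = 0. Then f = 0. -/

import Mathlib

open Polynomial Filter Topology Real

/-- (Liouville-type rigidity lemma.) A rational function `f` over `ℂ`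
whose denominator has all its roots at roots of unity, with `deg num ≤ deg denom`
(no pole at infinity), which is bounded on the unit circle (away from poles), and whose
numerator vanishes at `0`, is identically zero. -/
theorem ratFunc_poles_rootsOfUnity_bounded_eq_zero (f : RatFunc ℂ)
    (h1 : ∀ z : ℂ, Polynomial.eval z f.denom = 0 → ∃ m : ℕ, 1 ≤ m ∧ z ^ m = 1)
    (h2 : f.num.degree ≤ f.denom.degree)
    (h3 : ∃ M : ℝ, ∀ z : ℂ, ‖z‖ = 1 → Polynomial.eval z f.denom ≠ 0 →
      ‖Polynomial.eval z f.num / Polynomial.eval z f.denom‖ ≤ M)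
    (h4 : Polynomial.eval 0 f.num = 0) :
    f = 0 := by
  obtain ⟨M, hM⟩ := h3
  -- Step 1: the denominator has no roots at all.
  have hden : ∀ z : ℂ, Polynomial.eval z f.denom ≠ 0 := by
    intro z₀ hz₀
    obtain ⟨m, hm1, hm⟩ := h1 z₀ hz₀
    have hz₀norm : ‖z₀‖ = 1 := by
      have h := congrArg norm hm
      rw [norm_pow, norm_one] at h
      rcases lt_trichotomy ‖z₀‖ 1 with hlt | heq | hgt
      · have := pow_lt_one₀ (norm_nonneg z₀) hlt (by omega : m ≠ 0)
        linarith
      · exact heq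
      · have := one_lt_pow₀ hgt (by omega : m ≠ 0)
        linarith
    have hz₀ne : z₀ ≠ 0 := by
      intro h; rw [h, norm_zero] at hz₀norm; norm_num at hz₀norm
    -- numerator doesn't vanish at z₀ (coprimality)
    have hnum0 : Polynomial.eval z₀ f.num ≠ 0 := by
      obtain ⟨a, b, hab⟩ := f.isCoprime_num_denom
      intro h
      have := congrArg (Polynomial.eval z₀) hab
      simp [h, hz₀] at this
    set g : ℝ → ℂ := fun t => z₀ * Complex.exp (t * Complex.I) with hg
    have hginj : Set.InjOn g (Set.Ioo (0 : ℝ) 1) := by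
      intro s hs u hu hsu
      have hexp : Complex.exp (s * Complex.I) = Complex.exp (u * Complex.I) :=
        mul_left_cancel₀ hz₀ne hsu
      rw [Complex.exp_eq_exp_iff_exists_int] at hexp
      obtain ⟨n, hn⟩ := hexp
      have him := congrArg Complex.im hn
      simp [Complex.add_im, Complex.mul_im] at him
      have hpi := Real.pi_gt_three
      have hn0 : n = 0 := by
        rcases lt_trichotomy n 0 with h | h | h
        · have hle : n ≤ -1 := by omega
          have : (n : ℝ) ≤ -1 := by exact_mod_cast hle
          nlinarith [hs.1, hs.2, hu.1, hu.2]
        · exact h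
        · have : (1 : ℝ) ≤ (n : ℝ) := by exact_mod_cast h
          nlinarith [hs.1, hs.2, hu.1, hu.2]
      rw [hn0] at him
      simpa using him
    set B : Set ℝ := Set.Ioo (0 : ℝ) 1 ∩ {t | Polynomial.eval (g t) f.denom = 0} with hB
    have hBfin : B.Finite := by
      apply Set.Finite.of_finite_image (f := g)
      · apply (Polynomial.finite_setOf_isRoot f.denom_ne_zero).subset
        rintro z ⟨t, ⟨-, ht⟩, rfl⟩
        exact ht
      · exact hginj.mono Set.inter_subset_left
    have hpick : ∀ n : ℕ, ∃ t : ℝ, t ∈ Set.Ioo (0 : ℝ) (1 / (n + 1)) ∧ t ∉ B := by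
      intro n
      have hpos : (0 : ℝ) < 1 / (n + 1) := by positivity
      obtain ⟨t, ht⟩ := ((Set.Ioo_infinite hpos).diff hBfin).nonempty
      exact ⟨t, ht.1, ht.2⟩
    choose t ht htB using hpick
    have htle : ∀ n : ℕ, t n < 1 := by
      intro n
      have : (1 : ℝ) / (n + 1) ≤ 1 := by
        rw [div_le_one (by positivity)]; linarith [Nat.cast_nonneg (α := ℝ) n]
      linarith [(ht n).2]
    have htIoo : ∀ n, t n ∈ Set.Ioo (0 : ℝ) 1 := fun n => ⟨(ht n).1, htle n⟩
    have hdne : ∀ n, Polynomial.eval (g (t n)) f.denom ≠ 0 := by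
      intro n hcon
      exact htB n ⟨htIoo n, hcon⟩
    have htz : Tendsto t atTop (𝓝 0) := by
      apply squeeze_zero (fun n => (ht n).1.le) (fun n => (ht n).2.le)
      exact tendsto_one_div_add_atTop_nhds_zero_nat
    have hgcont : Continuous g := by
      unfold g; fun_prop
    have hzt : Tendsto (fun n => g (t n)) atTop (𝓝 z₀) := by
      have := (hgcont.tendsto 0).comp htz
      simpa [hg, Function.comp_def] using this
    have hnumt : Tendsto (fun n => Polynomial.eval (g (t n)) f.num) atTop
        (𝓝 (Polynomial.eval z₀ f.num)) :=
      ((f.num.continuous_aeval).tendsto z₀).comp hzt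
    have hdent : Tendsto (fun n => Polynomial.eval (g (t n)) f.denom) atTop (𝓝 0) := by
      have := ((f.denom.continuous_aeval).tendsto z₀).comp hzt
      simpa [hz₀, Function.comp_def] using this
    have hdennorm : Tendsto (fun n => ‖Polynomial.eval (g (t n)) f.denom‖) atTop (𝓝[>] 0) := by
      apply tendsto_nhdsWithin_of_tendsto_nhds_of_eventually_within
      · simpa using hdent.norm
      · exact Filter.Eventually.of_forall fun n => norm_pos_iff.2 (hdne n)
    have hT : Tendsto (fun n => ‖Polynomial.eval (g (t n)) f.num‖ *
        (‖Polynomial.eval (g (t n)) f.denom‖)⁻¹) atTop atTop :=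
      Filter.Tendsto.pos_mul_atTop (norm_pos_iff.2 hnum0) hnumt.norm
        hdennorm.inv_tendsto_nhdsGT_zero
    obtain ⟨n, hn⟩ := (hT.eventually_gt_atTop M).exists
    have hnormg : ‖g (t n)‖ = 1 := by
      rw [hg]
      simp only [norm_mul, hz₀norm, one_mul]
      exact Complex.norm_exp_ofReal_mul_I (t n)
    have := hM (g (t n)) hnormg (hdne n)
    rw [norm_div, div_eq_mul_inv] at this
    linarith
  -- Step 2: denominator is constant, hence numerator constant, hence zero.
  have hdeg : f.denom.degree = 0 := by
    by_contra h
    obtain ⟨z, hz⟩ := IsAlgClosed.exists_root f.denom h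
    exact hden z hz
  have hnumdeg : f.num.degree ≤ 0 := h2.trans_eq hdeg
  have hc := Polynomial.degree_le_zero_iff.mp hnumdeg
  have hnum0 : f.num = 0 := by
    rw [hc, Polynomial.coeff_zero_eq_eval_zero, h4, map_zero]
  exact RatFunc.num_eq_zero_iff.mp hnum0
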